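/- Let H be a separable complex Hilbert space, T a bounded linear operator on H, and M a closed subspace of H that reduces T (T(M) ⊆ M and T*(M) ⊆ M, hence also T(Mᗮ) ⊆ Mᗮ and T*(Mᗮ) ⊆ Mᗮ) and such that Tx = 0 for all x ∈ M. Then there exists a conjugation C on H making T C-normal if and only if there exists a conjugation C' on Mᗮ making the restriction of T to Mᗮ C'-normal. -/

import Mathlib

open scoped InnerProductSpace
open ContinuousLinearMap TopologicalSpace

/-- A conjugation on a complex Hilbert space: an anti-linear, involutive map
satisfying `⟪C x, C y⟫ = ⟪y, x⟫`. -/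
def Conjugation {K : Type*} [NormedAddCommGroup K] [InnerProductSpace ℂ K] (C : K → K) : Prop :=
  (∀ (a : ℂ) (x y : K), C (a • x + y) = (starRingEnd ℂ) a • C x + C y) ∧
  (∀ x, C (C x) = x) ∧
  (∀ x y : K, ⟪C x, C y⟫_ℂ = ⟪y, x⟫_ℂ)

/-- `T` is `C`-normal: `C T*T C = T T*` (pointwise). -/
def CNormal {K : Type*} [NormedAddCommGroup K] [InnerProductSpace ℂ K] [CompleteSpace K]
    (C : K → K) (T : K →L[ℂ] K) : Prop :=
  ∀ x, C (adjoint T (T (C x))) = T (adjoint T x)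

set_option maxHeartbeats 1000000

section helpers
variable {E : Type*} [NormedAddCommGroup E] [InnerProductSpace ℂ E] {C : E → E}

lemma Conjugation.add (h : Conjugation C) (x y : E) : C (x + y) = C x + C y := by
  have := h.1 1 x y; simpa using this

lemma Conjugation.zero (h : Conjugation C) : C 0 = 0 := by
  simpa using h.add 0 0

lemma Conjugation.smulc (h : Conjugation C) (a : ℂ) (x : E) :
    C (a • x) = (starRingEnd ℂ) a • C x := by
  have := h.1 a x 0; simpa [h.zero] using this
end helpers

lemma exists_conjugation (K : Type*) [NormedAddCommGroup K] [InnerProductSpace ℂ K]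
    [CompleteSpace K] : ∃ C : K → K, Conjugation C := by
  obtain ⟨w, b, hb⟩ := exists_hilbertBasis ℂ K
  refine ⟨fun x => b.repr.symm (star (b.repr x)), ?_, ?_, ?_⟩
  · intro a x y
    simp only [map_add, LinearIsometryEquiv.map_smul, star_add, star_smul, starRingEnd_apply]
  · intro x; simp
  · intro x y
    rw [b.repr.symm.inner_map_map,
      show (⟪y, x⟫_ℂ) = ⟪b.repr y, b.repr x⟫_ℂ from (b.repr.inner_map_map y x).symm,
      lp.inner_eq_tsum, lp.inner_eq_tsum]
    congr 1; funext i
    simp only [lp.star_apply, RCLike.inner_apply, starRingEnd_apply, star_star]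
    rw [mul_comm]

section glue
variable {E : Type*} [NormedAddCommGroup E] [InnerProductSpace ℂ E] [CompleteSpace E]
variable (K : Submodule ℂ E) [CompleteSpace ↥K]

lemma conjugation_glue {J₁ : ↥K → ↥K} {J₂ : ↥Kᗮ → ↥Kᗮ}
    (h₁ : Conjugation J₁) (h₂ : Conjugation J₂) :
    Conjugation (fun x : E =>
      (J₁ (Submodule.orthogonalProjectionOnto K x) : E) + (J₂ (Submodule.orthogonalProjectionOnto Kᗮ x) : E)) := by
  have hP1 : ∀ u : ↥K, ∀ v : ↥Kᗮ,
      Submodule.orthogonalProjectionOnto K ((u : E) + (v : E)) = u := by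
    intro u v
    rw [map_add, Submodule.orthogonalProjectionOnto_mem_subspace_eq_self,
      Submodule.orthogonalProjectionOnto_apply_of_mem_orthogonal v.2, add_zero]
  have hP2 : ∀ u : ↥K, ∀ v : ↥Kᗮ,
      Submodule.orthogonalProjectionOnto Kᗮ ((u : E) + (v : E)) = v := by
    intro u v
    rw [map_add, Submodule.orthogonalProjectionOnto_mem_subspace_eq_self,
      Submodule.orthogonalProjectionOnto_apply_of_mem_orthogonal
        (K.le_orthogonal_orthogonal u.2), zero_add]
  refine ⟨?_, ?_, ?_⟩
  · intro a x y
    simp only [map_add, map_smul]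
    rw [h₁.1 a _ _, h₂.1 a _ _]
    push_cast
    module
  · intro x
    simp only [hP1, hP2, h₁.2.1, h₂.2.1]
    exact K.starProjection_add_starProjection_orthogonal x
  · intro x y
    have hc1 : ∀ (u : ↥K) (v : ↥Kᗮ), ⟪(u : E), (v : E)⟫_ℂ = 0 := fun u v =>
      Submodule.inner_right_of_mem_orthogonal u.2 v.2
    have hc2 : ∀ (u : ↥K) (v : ↥Kᗮ), ⟪(v : E), (u : E)⟫_ℂ = 0 := fun u v =>
      Submodule.inner_left_of_mem_orthogonal u.2 v.2
    simp only
    rw [inner_add_left, inner_add_right, inner_add_right, hc1, hc2, add_zero, zero_add,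
      ← Submodule.coe_inner, ← Submodule.coe_inner, h₁.2.2, h₂.2.2,
      Submodule.coe_inner, Submodule.coe_inner]
    conv_rhs => rw [← (show ((Submodule.orthogonalProjectionOnto K y : E) + (Submodule.orthogonalProjectionOnto Kᗮ y : E) = y) from
        K.starProjection_add_starProjection_orthogonal y),
      ← (show ((Submodule.orthogonalProjectionOnto K x : E) + (Submodule.orthogonalProjectionOnto Kᗮ x : E) = x) from
        K.starProjection_add_starProjection_orthogonal x)]
    rw [inner_add_left, inner_add_right, inner_add_right, hc1, hc2, add_zero, zero_add]
end glue

section glue2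
variable {E : Type*} [NormedAddCommGroup E] [InnerProductSpace ℂ E] [CompleteSpace E]
variable (K : Submodule ℂ E) [CompleteSpace ↥K]

lemma conjugation_glue_cnormal (S : E →L[ℂ] E)
    (hK1 : ∀ x ∈ K, S x = 0) (hK2 : ∀ x ∈ K, adjoint S x = 0)
    {J₁ : ↥K → ↥K} {J₂ : ↥Kᗮ → ↥Kᗮ}
    (h₁ : Conjugation J₁) (h₂ : Conjugation J₂)
    (hmain : ∀ (v : ↥Kᗮ) (hq : adjoint S (S ((J₂ v : ↥Kᗮ) : E)) ∈ Kᗮ),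
      ((J₂ ⟨adjoint S (S ((J₂ v : ↥Kᗮ) : E)), hq⟩ : ↥Kᗮ) : E) = S (adjoint S (v : E))) :
    CNormal (fun x : E =>
      (J₁ (Submodule.orthogonalProjectionOnto K x) : E) + (J₂ (Submodule.orthogonalProjectionOnto Kᗮ x) : E)) S := by
  intro x
  simp only
  set u := Submodule.orthogonalProjectionOnto K x with hu
  set v := Submodule.orthogonalProjectionOnto Kᗮ x with hv
  have hSC : S ((J₁ u : E) + (J₂ v : E)) = S ((J₂ v : ↥Kᗮ) : E) := by
    rw [map_add, hK1 _ (J₁ u).2, zero_add]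
  rw [hSC]
  set q := adjoint S (S ((J₂ v : ↥Kᗮ) : E)) with hq'
  have hq : q ∈ Kᗮ := by
    rw [Submodule.mem_orthogonal]
    intro k hk
    rw [hq', adjoint_inner_right, hK1 _ hk, inner_zero_left]
  have hPKq : Submodule.orthogonalProjectionOnto K q = 0 :=
    Submodule.orthogonalProjectionOnto_apply_of_mem_orthogonal hq
  have hPKq' : Submodule.orthogonalProjectionOnto Kᗮ q = ⟨q, hq⟩ :=
    Submodule.orthogonalProjectionOnto_mem_subspace_eq_self (⟨q, hq⟩ : ↥Kᗮ)
  rw [hPKq, hPKq', h₁.zero, Submodule.coe_zero, zero_add, hmain v hq]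
  congr 1
  conv_rhs => rw [← (show ((Submodule.orthogonalProjectionOnto K x : E) + (Submodule.orthogonalProjectionOnto Kᗮ x : E) = x) from
    K.starProjection_add_starProjection_orthogonal x)]
  rw [map_add, hK2 _ u.2, zero_add]
end glue2

section restrict
variable {H : Type*} [NormedAddCommGroup H] [InnerProductSpace ℂ H] [CompleteSpace H]
variable {T : H →L[ℂ] H} {M : Submodule ℂ H}

lemma adj_maps (hTM : ∀ x ∈ M, T x ∈ M) : ∀ u ∈ Mᗮ, adjoint T u ∈ Mᗮ := by
  intro u hu
  rw [Submodule.mem_orthogonal]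
  intro m hm
  rw [adjoint_inner_right]
  exact Submodule.inner_right_of_mem_orthogonal (hTM m hm) hu

lemma fun_maps (hTaM : ∀ x ∈ M, adjoint T x ∈ M) : ∀ u ∈ Mᗮ, T u ∈ Mᗮ := by
  intro u hu
  rw [Submodule.mem_orthogonal]
  intro m hm
  rw [show T = adjoint (adjoint T) from (adjoint_adjoint T).symm, adjoint_inner_right]
  exact Submodule.inner_right_of_mem_orthogonal (hTaM m hm) hu

lemma adjoint_restrict [CompleteSpace ↥Mᗮ] (hTM : ∀ x ∈ M, T x ∈ M)
    (T' : ↥Mᗮ →L[ℂ] ↥Mᗮ) (hT' : ∀ x : ↥Mᗮ, ((T' x : ↥Mᗮ) : H) = T ↑x) :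
    ∀ x : ↥Mᗮ, ((adjoint T' x : ↥Mᗮ) : H) = adjoint T ↑x := by
  intro x
  set d : ↥Mᗮ := adjoint T' x - ⟨adjoint T ↑x, adj_maps hTM _ x.2⟩ with hd
  have h0 : ∀ v : ↥Mᗮ, ⟪d, v⟫_ℂ = 0 := by
    intro v
    rw [hd, inner_sub_left, adjoint_inner_left]
    have : ⟪(⟨adjoint T ↑x, adj_maps hTM _ x.2⟩ : ↥Mᗮ), v⟫_ℂ = ⟪x, T' v⟫_ℂ := by
      rw [Submodule.coe_inner, Submodule.coe_inner]
      simp only [adjoint_inner_left, hT']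
    rw [this, sub_self]
  have : d = 0 := by
    have := h0 d
    rwa [inner_self_eq_zero] at this
  have h1 : adjoint T' x = ⟨adjoint T ↑x, adj_maps hTM _ x.2⟩ := by
    rwa [sub_eq_zero] at this
  rw [h1]
end restrict
set_option maxHeartbeats 1000000

/-- If `M` is a closed reducing subspace for `T` on which `T` vanishes, then `T` is
conjugate normal (for some conjugation on `H`) iff the restriction of `T` to `Mᗮ` is
conjugate normal (for some conjugation on `Mᗮ`). -/
theorem stmt_6 {H : Type*} [NormedAddCommGroup H] [InnerProductSpace ℂ H] [CompleteSpace H]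
    [SeparableSpace H]
    (T : H →L[ℂ] H) (M : Submodule ℂ H) (hMc : IsClosed (M : Set H))
    (hTM : ∀ x ∈ M, T x ∈ M) (hTaM : ∀ x ∈ M, adjoint T x ∈ M)
    (hT0 : ∀ x ∈ M, T x = 0) :
    (∃ C : H → H, Conjugation C ∧ CNormal C T) ↔
      (∃ C' : ↥Mᗮ → ↥Mᗮ, Conjugation C' ∧
        ∃ T' : ↥Mᗮ →L[ℂ] ↥Mᗮ, (∀ x : ↥Mᗮ, (T' x : H) = T x) ∧ CNormal C' T') := by
  haveI : CompleteSpace ↥M := hMc.completeSpace_coe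
  haveI : CompleteSpace ↥Mᗮ := (Submodule.isClosed_orthogonal M).completeSpace_coe
  -- adjoint also vanishes on M
  have hTa0 : ∀ x ∈ M, adjoint T x = 0 := by
    intro x hx
    rw [← inner_self_eq_zero (𝕜 := ℂ)]
    rw [adjoint_inner_left, hT0 _ (hTaM x hx), inner_zero_right]
  constructor
  · -- forward
    rintro ⟨C, hC, hCN⟩
    set T' : ↥Mᗮ →L[ℂ] ↥Mᗮ :=
      (T.comp Mᗮ.subtypeL).codRestrict Mᗮ (fun x => fun_maps hTaM _ x.2) with hT'def
    have hT'coe : ∀ x : ↥Mᗮ, ((T' x : ↥Mᗮ) : H) = T ↑x := fun x => rfl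
    have hT'adj : ∀ x : ↥Mᗮ, ((adjoint T' x : ↥Mᗮ) : H) = adjoint T ↑x :=
      adjoint_restrict hTM T' hT'coe
    have hCinj : ∀ u : H, C u = 0 → u = 0 := by
      intro u h
      have h2 := hC.2.1 u
      rw [h, hC.zero] at h2
      exact h2.symm
    have hker : ∀ q : H, T q = 0 → adjoint T q = 0 →
        (T (C q) = 0 ∧ adjoint T (C q) = 0) := by
      intro q h1 h2
      constructor
      · have h3 : C (adjoint T (T (C q))) = 0 := by rw [hCN q, h2, map_zero]
        have h4 : adjoint T (T (C q)) = 0 := hCinj _ h3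
        rw [← inner_self_eq_zero (𝕜 := ℂ), ← adjoint_inner_right, h4, inner_zero_right]
      · have h3 : T (C (C q)) = 0 := by rw [hC.2.1, h1]
        have h4 : T (adjoint T (C q)) = 0 := by
          have h5 := hCN (C q)
          rw [h3, map_zero, hC.zero] at h5
          exact h5.symm
        rw [← inner_self_eq_zero (𝕜 := ℂ), adjoint_inner_left, h4, inner_zero_right]
    set Q : H → Prop := fun q => ∀ k : H, T k = 0 → adjoint T k = 0 → ⟪k, q⟫_ℂ = 0 with hQdef
    have hQM : ∀ q, Q q → q ∈ Mᗮ := by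
      intro q hq
      rw [Submodule.mem_orthogonal]
      intro m hm
      exact hq m (hT0 m hm) (hTa0 m hm)
    have hQC : ∀ q, Q q → Q (C q) := by
      intro q hq k h1 h2
      conv_lhs => rw [← hC.2.1 k]
      rw [hC.2.2, ← inner_conj_symm, hq (C k) (hker k h1 h2).1 (hker k h1 h2).2, map_zero]
    set Kk : Submodule ℂ ↥Mᗮ := LinearMap.ker (T' : ↥Mᗮ →ₗ[ℂ] ↥Mᗮ) ⊓ LinearMap.ker (adjoint T' : ↥Mᗮ →ₗ[ℂ] ↥Mᗮ) with hKkdef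
    haveI : CompleteSpace ↥Kk := by
      refine IsClosed.completeSpace_coe (hs := ?_)
      rw [hKkdef, Submodule.coe_inf]
      exact (ContinuousLinearMap.isClosed_ker T').inter
        (ContinuousLinearMap.isClosed_ker (adjoint T'))
    have hKk1 : ∀ x ∈ Kk, T' x = 0 := fun x hx =>
      LinearMap.mem_ker.mp (Submodule.mem_inf.mp hx).1
    have hKk2 : ∀ x ∈ Kk, adjoint T' x = 0 := fun x hx =>
      LinearMap.mem_ker.mp (Submodule.mem_inf.mp hx).2
    obtain ⟨J₁, hJ₁⟩ := exists_conjugation ↥Kk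
    have hb1 : ∀ u : ↥Mᗮ, u ∈ Kkᗮ → Q ((u : ↥Mᗮ) : H) := by
      intro u hu k h1 h2
      set m : H := ((Submodule.orthogonalProjectionOnto M k : ↥M) : H) with hmdef
      set k2 : H := k - m with hk2def
      have hk2M : k2 ∈ Mᗮ := M.sub_starProjection_mem_orthogonal k
      have hTk2 : T k2 = 0 := by
        rw [hk2def, map_sub, h1, hT0 _ (Submodule.orthogonalProjectionOnto M k).2, sub_zero]
      have hTak2 : adjoint T k2 = 0 := by
        rw [hk2def, map_sub, h2, hTa0 _ (Submodule.orthogonalProjectionOnto M k).2, sub_zero]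
      have hk2K : (⟨k2, hk2M⟩ : ↥Mᗮ) ∈ Kk := by
        rw [hKkdef, Submodule.mem_inf]
        constructor
        · rw [LinearMap.mem_ker, ContinuousLinearMap.coe_coe]
          exact Subtype.ext (by rw [hT'coe]; exact hTk2)
        · rw [LinearMap.mem_ker, ContinuousLinearMap.coe_coe]
          exact Subtype.ext (by rw [hT'adj]; exact hTak2)
      have hks : k = m + k2 := by rw [hk2def]; abel
      rw [hks, inner_add_left,
        Submodule.inner_right_of_mem_orthogonal (Submodule.orthogonalProjectionOnto M k).2 u.2]
      have hcoe : ⟪(⟨k2, hk2M⟩ : ↥Mᗮ), u⟫_ℂ = ⟪k2, ((u : ↥Mᗮ) : H)⟫_ℂ :=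
        Submodule.coe_inner _ _ _
      rw [← hcoe, Submodule.inner_right_of_mem_orthogonal hk2K hu, add_zero]
    have hb2 : ∀ q (h : Q q), (⟨q, hQM q h⟩ : ↥Mᗮ) ∈ Kkᗮ := by
      intro q h
      rw [Submodule.mem_orthogonal]
      intro w hw
      rw [Submodule.coe_inner]
      apply h
      · rw [← hT'coe w, show T' w = 0 from LinearMap.mem_ker.mp (Submodule.mem_inf.mp hw).1,
          Submodule.coe_zero]
      · rw [← hT'adj w, show adjoint T' w = 0 from LinearMap.mem_ker.mp (Submodule.mem_inf.mp hw).2,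
          Submodule.coe_zero]
    set J₂ : ↥Kkᗮ → ↥Kkᗮ := fun z =>
      ⟨⟨C (((z : ↥Kkᗮ) : ↥Mᗮ) : H), hQM _ (hQC _ (hb1 _ z.2))⟩, hb2 _ (hQC _ (hb1 _ z.2))⟩ with hJ₂def
    have hJ₂coe : ∀ z : ↥Kkᗮ, (((J₂ z : ↥Kkᗮ) : ↥Mᗮ) : H) = C (((z : ↥Kkᗮ) : ↥Mᗮ) : H) :=
      fun z => rfl
    have hJ₂ : Conjugation J₂ := by
      refine ⟨?_, ?_, ?_⟩
      · intro a x y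
        apply Subtype.ext
        apply Subtype.ext
        show C ((((a • x + y : ↥Kkᗮ) : ↥Mᗮ) : H)) = _
        push_cast
        rw [hC.1 a]
      · intro x
        apply Subtype.ext
        apply Subtype.ext
        show C (C _) = _
        rw [hC.2.1]
      · intro x y
        simp only [Submodule.coe_inner]
        exact hC.2.2 _ _
    have hmain : ∀ (v : ↥Kkᗮ) (hq : adjoint T' (T' ((J₂ v : ↥Kkᗮ) : ↥Mᗮ)) ∈ Kkᗮ),
        ((J₂ ⟨adjoint T' (T' ((J₂ v : ↥Kkᗮ) : ↥Mᗮ)), hq⟩ : ↥Kkᗮ) : ↥Mᗮ) =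
          T' (adjoint T' ((v : ↥Kkᗮ) : ↥Mᗮ)) := by
      intro v hq
      apply Subtype.ext
      show C ((adjoint T' (T' ((J₂ v : ↥Kkᗮ) : ↥Mᗮ)) : ↥Mᗮ) : H) =
        ((T' (adjoint T' ((v : ↥Kkᗮ) : ↥Mᗮ)) : ↥Mᗮ) : H)
      rw [hT'adj, hT'coe, hJ₂coe, hCN, hT'coe, hT'adj]
    exact ⟨fun x : ↥Mᗮ =>
      ((J₁ (Submodule.orthogonalProjectionOnto Kk x) : ↥Kk) : ↥Mᗮ) +
        ((J₂ (Submodule.orthogonalProjectionOnto Kkᗮ x) : ↥Kkᗮ) : ↥Mᗮ),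
      conjugation_glue Kk hJ₁ hJ₂, T', fun x => rfl,
      conjugation_glue_cnormal Kk T' hKk1 hKk2 hJ₁ hJ₂ hmain⟩
  · -- backward
    rintro ⟨C', hC', T', hT'coe, hCN'⟩
    obtain ⟨J₁, hJ₁⟩ := exists_conjugation ↥M
    refine ⟨fun x : H =>
      ((J₁ (Submodule.orthogonalProjectionOnto M x) : ↥M) : H) +
      ((C' (Submodule.orthogonalProjectionOnto Mᗮ x) : ↥Mᗮ) : H), conjugation_glue M hJ₁ hC', ?_⟩
    refine conjugation_glue_cnormal M T hT0 hTa0 hJ₁ hC' ?_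
    intro v hq
    have e1 : T ((C' v : ↥Mᗮ) : H) = ((T' (C' v) : ↥Mᗮ) : H) := (hT'coe _).symm
    have e2 : adjoint T ((T' (C' v) : ↥Mᗮ) : H) = ((adjoint T' (T' (C' v)) : ↥Mᗮ) : H) :=
      (adjoint_restrict hTM T' hT'coe _).symm
    have e3 : (⟨adjoint T (T ((C' v : ↥Mᗮ) : H)), hq⟩ : ↥Mᗮ) = adjoint T' (T' (C' v)) := by
      apply Subtype.ext
      simp only [e1, e2]
    rw [e3, hCN' v, hT'coe, adjoint_restrict hTM T' hT'coe]
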